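/- Every graph G with n vertices and m ≥ 3n^{3/2} edges (n sufficiently large) contains a complete balanced bipartite subgraph K_{q,q} with q = ⌊ln(n/2)/ln(2en²/m)⌋. -/

import Mathlib

open Real

set_option maxHeartbeats 1000000 in
theorem stmt10 :
    ∃ N : ℕ, ∀ n : ℕ, N ≤ n → ∀ (V : Type) [Fintype V] [DecidableEq V]
      (G : SimpleGraph V) [DecidableRel G.Adj] (m : ℕ),
      Fintype.card V = n → G.edgeFinset.card = m → 3 * (n : ℝ) ^ ((3:ℝ)/2) ≤ m →
      ∀ q : ℕ, q = ⌊Real.log (n / 2) / Real.log (2 * Real.exp 1 * n ^ 2 / m)⌋₊ →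
      ∃ A B : Finset V, Disjoint A B ∧ A.card = q ∧ B.card = q ∧
        ∀ a ∈ A, ∀ b ∈ B, G.Adj a b := by
  refine ⟨4, fun n hn V _ _ G _ m hcard hedge hm q hq => ?_⟩
  rcases Nat.eq_zero_or_pos q with hq0 | hqpos
  · exact ⟨∅, ∅, by simp, by simp [hq0], by simp [hq0], by simp⟩
  set x := 2 * Real.exp 1 * (n:ℝ) ^ 2 / (m:ℝ) with hx_def
  -- basic positivity
  have hn4 : (4:ℝ) ≤ n := by exact_mod_cast hn
  have hn0 : (0:ℝ) < n := by linarith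
  have hsn : (0:ℝ) < Real.sqrt n := Real.sqrt_pos.2 hn0
  have hrp : (n:ℝ) ^ ((3:ℝ)/2) = n * Real.sqrt n := by
    rw [Real.sqrt_eq_rpow, show (3:ℝ)/2 = 1 + 1/2 by norm_num, Real.rpow_add hn0,
      Real.rpow_one]
  have hmn : 3 * (n:ℝ) * Real.sqrt n ≤ m := by rw [hrp] at hm; linarith
  have hm0 : (0:ℝ) < m := lt_of_lt_of_le (by positivity) hmn
  have hm0' : 0 < m := by exact_mod_cast hm0
  -- m ≤ n^2/2
  have hm_le : (m:ℝ) ≤ (n:ℝ)^2 / 2 := by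
    have h1 : m ≤ n.choose 2 := by
      rw [← hedge, ← hcard]; exact G.card_edgeFinset_le_card_choose_two
    have h2 : ((n.choose 2 : ℕ) : ℝ) = n * (n - 1) / 2 := Nat.cast_choose_two (K := ℝ) n
    have h3 : (m:ℝ) ≤ ((n.choose 2 : ℕ) : ℝ) := by exact_mod_cast h1
    nlinarith
  have he2 : (2:ℝ) ≤ Real.exp 1 := by have := Real.add_one_le_exp (1:ℝ); linarith
  have he4 : Real.exp 1 ≤ 4 := by have := Real.exp_one_lt_d9; linarith
  have hx4e : 4 * Real.exp 1 ≤ x := by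
    rw [hx_def, le_div_iff₀ hm0]; nlinarith
  have hx0 : (0:ℝ) < x := by nlinarith
  have hlog2 : (2:ℝ) ≤ Real.log x := by
    have hex : Real.exp 2 ≤ x := by
      rw [show (2:ℝ) = 1 + 1 from by norm_num, Real.exp_add]
      nlinarith [Real.exp_pos 1]
    calc (2:ℝ) = Real.log (Real.exp 2) := (Real.log_exp 2).symm
      _ ≤ Real.log x := Real.log_le_log (Real.exp_pos 2) hex
  have hlogx0 : (0:ℝ) < Real.log x := by linarith
  have hlogn0 : (0:ℝ) ≤ Real.log ((n:ℝ)/2) := Real.log_nonneg (by linarith)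
  have hqL : (q:ℝ) ≤ Real.log ((n:ℝ)/2) / Real.log x := by
    rw [hq]; exact Nat.floor_le (div_nonneg hlogn0 hlogx0.le)
  -- 2 * x^q ≤ n
  have hxq : 2 * x ^ q ≤ (n:ℝ) := by
    have h1 : (q:ℝ) * Real.log x ≤ Real.log ((n:ℝ)/2) := (le_div_iff₀ hlogx0).mp hqL
    have h2 : Real.log (x ^ q) ≤ Real.log ((n:ℝ)/2) := by
      rw [Real.log_pow]; exact_mod_cast h1
    have h3 : x ^ q ≤ (n:ℝ)/2 :=
      (Real.log_le_log_iff (by positivity) (by positivity)).mp h2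
    linarith
  -- q ≤ m / n
  have hqD : (q:ℝ) ≤ (m:ℝ) / n := by
    have h1 : Real.log ((n:ℝ)/2) / Real.log x ≤ Real.log ((n:ℝ)/2) / 2 := by
      rw [div_le_div_iff₀ hlogx0 (by norm_num)]; nlinarith
    have h2 : Real.log ((n:ℝ)/2) ≤ Real.log n :=
      Real.log_le_log (by positivity) (by linarith)
    have h3 : Real.log n ≤ 2 * Real.sqrt n := by
      have h := Real.log_le_sub_one_of_pos hsn
      have h4 : Real.log (Real.sqrt n) = Real.log n / 2 := Real.log_sqrt hn0.le
      linarith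
    have h5 : 3 * Real.sqrt n ≤ (m:ℝ) / n := by
      rw [le_div_iff₀ hn0]; nlinarith
    linarith
  -- setup the counting
  obtain ⟨p, hpq⟩ : ∃ p, p + 1 = q := ⟨q - 1, Nat.succ_pred_eq_of_pos hqpos⟩
  set T := ∑ v : V, (G.degree v).choose q with hT_def
  have hdeg_sum : ∑ v : V, G.degree v = 2 * m := by
    rw [G.sum_degrees_eq_twice_card_edges, hedge]
  have hcardV : (Finset.univ : Finset V).card = n := by rw [Finset.card_univ, hcard]
  have hqm : (n:ℝ) * q ≤ m := by
    have := (le_div_iff₀ hn0).mp hqD; linarith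
  -- lower bound sum of truncated degrees
  have hSf : 2*(m:ℝ) - n*q ≤ ∑ v : V, ((G.degree v - q : ℕ) : ℝ) := by
    have h1 : ∀ v : V, ((G.degree v):ℝ) - q ≤ ((G.degree v - q : ℕ):ℝ) := by
      intro v
      rcases le_or_gt q (G.degree v) with h | h
      · rw [Nat.cast_sub h]
      · have he : G.degree v - q = 0 := Nat.sub_eq_zero_of_le h.le
        have hc : ((G.degree v):ℝ) < q := by exact_mod_cast h
        rw [he]; push_cast; linarith
    have h2 : ∑ v : V, (((G.degree v):ℝ) - q) = 2*(m:ℝ) - n*q := by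
      rw [Finset.sum_sub_distrib, Finset.sum_const, hcardV, nsmul_eq_mul]
      have : ∑ v : V, ((G.degree v):ℝ) = ((2 * m : ℕ) : ℝ) := by
        rw [← hdeg_sum]; push_cast; rfl
      rw [this]; push_cast; ring
    calc 2*(m:ℝ) - n*q = ∑ v : V, (((G.degree v):ℝ) - q) := h2.symm
      _ ≤ _ := Finset.sum_le_sum (fun v _ => h1 v)
  have hsum_nonneg : (0:ℝ) ≤ 2*(m:ℝ) - n*q := by linarith
  -- Jensen
  have hJ : (2*(m:ℝ) - n*q)^q / (n:ℝ)^p ≤ ∑ v : V, ((G.degree v - q : ℕ):ℝ)^q := by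
    have h1 := pow_sum_div_card_le_sum_pow
      (f := fun v : V => ((G.degree v - q : ℕ):ℝ)) (s := Finset.univ)
      (fun i _ => by positivity) p
    rw [hcardV, hpq] at h1
    refine le_trans ?_ h1
    gcongr <;> first | exact hSf | positivity
  -- pointwise descFactorial bound
  have hPW : ∑ v : V, ((G.degree v - q : ℕ):ℝ)^q ≤ (q.factorial : ℝ) * T := by
    have h1 : ∀ v : V, ((G.degree v - q : ℕ))^q ≤ q.factorial * (G.degree v).choose q := by
      intro v
      calc (G.degree v - q)^q ≤ (G.degree v + 1 - q)^q := Nat.pow_le_pow_left (by omega) q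
        _ ≤ (G.degree v).descFactorial q := Nat.pow_sub_le_descFactorial _ q
        _ = q.factorial * (G.degree v).choose q :=
            Nat.descFactorial_eq_factorial_mul_choose _ q
    calc ∑ v : V, ((G.degree v - q : ℕ):ℝ)^q
        ≤ ∑ v : V, ((q.factorial * (G.degree v).choose q : ℕ) : ℝ) := by
          refine Finset.sum_le_sum (fun v _ => ?_)
          rw [show ((G.degree v - q : ℕ):ℝ)^q = (((G.degree v - q)^q : ℕ) : ℝ) by push_cast; ring]
          exact_mod_cast h1 v
      _ = (q.factorial : ℝ) * T := by
          rw [hT_def]; push_cast [Finset.mul_sum]; ring_nf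
  -- key strict inequality
  have hkey : (q.factorial : ℝ) * ((q:ℝ) * (n.choose q)) < (q.factorial : ℝ) * T := by
    have hxD : x * ((m:ℝ)/n) = 2 * Real.exp 1 * n := by
      rw [hx_def]; field_simp
    have hq2 : (q:ℝ) < 2 * 2^q := by
      have := Nat.lt_two_pow_self (n := q)
      have h2 : (q:ℝ) < 2^q := by exact_mod_cast this
      have : (0:ℝ) < 2^q := by positivity
      linarith
    have hcb : ((n.choose q : ℕ) : ℝ) ≤ (n:ℝ)^q / q.factorial :=
      Nat.choose_le_pow_div q n
    have hf0 : (0:ℝ) < q.factorial := by exact_mod_cast q.factorial_pos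
    have step1 : (q.factorial:ℝ) * ((q:ℝ) * (n.choose q)) ≤ q * (n:ℝ)^q := by
      have h := mul_le_mul_of_nonneg_left hcb (by positivity : (0:ℝ) ≤ (q:ℝ) * q.factorial)
      calc (q.factorial:ℝ) * ((q:ℝ) * (n.choose q))
          = (q:ℝ) * q.factorial * (n.choose q) := by ring
        _ ≤ q * q.factorial * ((n:ℝ)^q / q.factorial) := h
        _ = q * (n:ℝ)^q := by field_simp
    have step2 : (q:ℝ) * (n:ℝ)^q < 2 * (2 * Real.exp 1 * n)^q := by
      have h1 : (2 * Real.exp 1 * (n:ℝ))^q = (2*Real.exp 1)^q * (n:ℝ)^q := by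
        rw [mul_pow]
      have h2 : (2:ℝ)^q ≤ (2*Real.exp 1)^q := by
        apply pow_le_pow_left₀ (by norm_num); nlinarith
      have hn_pow : (0:ℝ) < (n:ℝ)^q := by positivity
      rw [h1]
      calc (q:ℝ) * (n:ℝ)^q < 2 * 2^q * (n:ℝ)^q :=
            mul_lt_mul_of_pos_right hq2 hn_pow
        _ ≤ 2 * (2*Real.exp 1)^q * (n:ℝ)^q := by
            apply mul_le_mul_of_nonneg_right _ hn_pow.le
            linarith
        _ = 2 * ((2*Real.exp 1)^q * (n:ℝ)^q) := by ring
    have step3 : 2 * (2 * Real.exp 1 * (n:ℝ))^q ≤ (n:ℝ) * ((m:ℝ)/n)^q := by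
      have h1 : (2 * Real.exp 1 * (n:ℝ))^q = x^q * ((m:ℝ)/n)^q := by
        rw [← mul_pow, hxD]
      rw [h1]
      have h2 : (0:ℝ) ≤ ((m:ℝ)/n)^q := by positivity
      calc 2 * (x^q * ((m:ℝ)/n)^q) = (2 * x^q) * ((m:ℝ)/n)^q := by ring
        _ ≤ (n:ℝ) * ((m:ℝ)/n)^q := mul_le_mul_of_nonneg_right hxq h2
    have step4 : (n:ℝ) * ((m:ℝ)/n)^q ≤ (2*(m:ℝ) - n*q)^q / (n:ℝ)^p := by
      have h1 : ((m:ℝ)/n) ≤ (2*(m:ℝ) - n*q)/n := by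
        rw [div_le_div_iff₀ hn0 hn0]; nlinarith
      have h2 : (0:ℝ) ≤ (m:ℝ)/n := by positivity
      have h3 : ((m:ℝ)/n)^q ≤ ((2*(m:ℝ) - n*q)/n)^q := pow_le_pow_left₀ h2 h1 q
      have h4 : (n:ℝ) * ((2*(m:ℝ) - n*q)/n)^q = (2*(m:ℝ) - n*q)^q / (n:ℝ)^p := by
        rw [div_pow, ← hpq, pow_succ]
        field_simp
        ring
      rw [← h4]
      exact mul_le_mul_of_nonneg_left h3 hn0.le
    calc (q.factorial:ℝ) * ((q:ℝ) * (n.choose q)) ≤ q * (n:ℝ)^q := step1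
      _ < 2 * (2 * Real.exp 1 * n)^q := step2
      _ ≤ (n:ℝ) * ((m:ℝ)/n)^q := step3
      _ ≤ (2*(m:ℝ) - n*q)^q / (n:ℝ)^p := step4
      _ ≤ ∑ v : V, ((G.degree v - q : ℕ):ℝ)^q := hJ
      _ ≤ (q.factorial : ℝ) * T := hPW
  have hlt : q * n.choose q < T := by
    have hf0 : (0:ℝ) < (q.factorial : ℝ) := by exact_mod_cast q.factorial_pos
    have h1 : (q:ℝ) * (n.choose q) < T := lt_of_mul_lt_mul_left hkey hf0.le
    exact_mod_cast h1
  -- double counting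
  have hT : T = ∑ S ∈ Finset.powersetCard q (Finset.univ : Finset V),
      (Finset.univ.filter (fun v => S ⊆ G.neighborFinset v)).card := by
    have h1 : ∀ v : V, (G.degree v).choose q =
        ((Finset.powersetCard q (Finset.univ : Finset V)).filter
          (fun S => S ⊆ G.neighborFinset v)).card := by
      intro v
      rw [← SimpleGraph.card_neighborFinset_eq_degree, ← Finset.card_powersetCard]
      congr 1
      ext S
      simp only [Finset.mem_powersetCard, Finset.mem_filter, Finset.subset_univ, true_and]
      tauto
    rw [hT_def]
    rw [Finset.sum_congr rfl (fun v _ => h1 v)]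
    simp only [Finset.card_filter]
    rw [Finset.sum_comm]
  -- pigeonhole
  have hex : ∃ S ∈ Finset.powersetCard q (Finset.univ : Finset V),
      q ≤ (Finset.univ.filter (fun v => S ⊆ G.neighborFinset v)).card := by
    by_contra hcon
    push_neg at hcon
    have hcp : (Finset.powersetCard q (Finset.univ : Finset V)).card = n.choose q := by
      rw [Finset.card_powersetCard, hcardV]
    have h2 : T ≤ n.choose q * (q - 1) := by
      rw [hT]
      calc ∑ S ∈ Finset.powersetCard q (Finset.univ : Finset V),
            (Finset.univ.filter (fun v => S ⊆ G.neighborFinset v)).card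
          ≤ ∑ S ∈ Finset.powersetCard q (Finset.univ : Finset V), (q-1) :=
            Finset.sum_le_sum (fun S hS => by have := hcon S hS; omega)
        _ = n.choose q * (q-1) := by rw [Finset.sum_const, smul_eq_mul, hcp]
    have h3 : n.choose q * (q - 1) ≤ n.choose q * q := Nat.mul_le_mul_left _ (by omega)
    have h4 : n.choose q * q = q * n.choose q := Nat.mul_comm _ _
    omega
  obtain ⟨S, hS, hSle⟩ := hex
  obtain ⟨A, hAsub, hAcard⟩ := Finset.exists_subset_card_eq hSle
  have hScard : S.card = q := (Finset.mem_powersetCard.mp hS).2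
  refine ⟨A, S, ?_, hAcard, hScard, ?_⟩
  · rw [Finset.disjoint_left]
    intro a haA haS
    have h := hAsub haA
    rw [Finset.mem_filter] at h
    have h2 : a ∈ G.neighborFinset a := h.2 haS
    rw [SimpleGraph.mem_neighborFinset] at h2
    exact G.irrefl h2
  · intro a haA b hbS
    have h := hAsub haA
    rw [Finset.mem_filter] at h
    have h2 := h.2 hbS
    rwa [SimpleGraph.mem_neighborFinset] at h2
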